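/- Let Â = L(Q + TZᴴ)R with R nonsingular, L(n+1:N,1:k) = −T_k^{-1}, and Â(n+1:N,:) = 0 (the last k rows of Â vanish). Then Zᴴ = L(n+1:N, :)·Q, i.e., the matrix Z is uniquely recoverable from L and Q. -/

import Mathlib

open scoped Matrix

theorem stmt_17 {n k : ℕ}
    (L R Q : Matrix (Fin (n + k)) (Fin (n + k)) ℂ)
    (hL : L ∈ Matrix.unitaryGroup (Fin (n + k)) ℂ)
    (hLhess : ∀ i j : Fin (n + k), (i : ℕ) + k < (j : ℕ) → L i j = 0)
    (hLprop : ∀ i j : Fin (n + k), (j : ℕ) = (i : ℕ) + k → L i j ≠ 0)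
    (hR : R ∈ Matrix.unitaryGroup (Fin (n + k)) ℂ)
    (hRhess : ∀ i j : Fin (n + k), (j : ℕ) + k < (i : ℕ) → R i j = 0)
    (hQ : Q ∈ Matrix.unitaryGroup (Fin (n + k)) ℂ)
    (hQhess : ∀ i j : Fin (n + k), (j : ℕ) + 1 < (i : ℕ) → Q i j = 0)
    (hQblock : ∀ i j : Fin (n + k), ((i : ℕ) < k ∨ (j : ℕ) < k) → Q i j = if i = j then 1 else 0)
    (Tk : Matrix (Fin k) (Fin k) ℂ)
    (hTkTri : ∀ i j : Fin k, (j : ℕ) < (i : ℕ) → Tk i j = 0)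
    (hTkUnit : IsUnit Tk.det)
    (T : Matrix (Fin (n + k)) (Fin k) ℂ)
    (hTtop : ∀ i j : Fin k, T (Fin.castLE (Nat.le_add_left k n) i) j = Tk i j)
    (hTbot : ∀ i : Fin (n + k), k ≤ (i : ℕ) → ∀ j, T i j = 0)
    (hLbot : ∀ i j : Fin k, L ⟨n + (i : ℕ), by have := i.isLt; omega⟩ (Fin.castLE (Nat.le_add_left k n) j) = (-Tk⁻¹) i j)
    (hRunit : IsUnit R.det)
    (Z : Matrix (Fin (n + k)) (Fin k) ℂ)
    (hzero : ∀ i : Fin (n + k), n ≤ (i : ℕ) → ∀ j,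
      (L * (Q + T * Zᴴ) * R) i j = 0) :
    Zᴴ = (Matrix.of fun (i : Fin k) (j : Fin (n + k)) =>
      L ⟨n + (i : ℕ), by have := i.isLt; omega⟩ j) * Q := by

  set Lb : Matrix (Fin k) (Fin (n + k)) ℂ :=
    (Matrix.of fun (i : Fin k) (j : Fin (n + k)) =>
      L ⟨n + (i : ℕ), by have := i.isLt; omega⟩ j) with hLb
  -- Step 1: the last k rows of L * (Q + T * Zᴴ) vanish
  have hM : ∀ (i : Fin k) (j : Fin (n + k)),
      (L * (Q + T * Zᴴ)) ⟨n + (i : ℕ), by have := i.isLt; omega⟩ j = 0 := by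
    intro i j
    have hMR : L * (Q + T * Zᴴ) * R * R⁻¹ = L * (Q + T * Zᴴ) :=
      Matrix.mul_nonsing_inv_cancel_right _ _ hRunit
    have := congrFun (congrFun hMR ⟨n + (i : ℕ), by have := i.isLt; omega⟩) j
    rw [← this, Matrix.mul_apply]
    apply Finset.sum_eq_zero
    intro m _
    rw [hzero _ (by simp) m]
    ring
  -- Step 2: Lb * (Q + T * Zᴴ) = 0
  have hLbM : Lb * (Q + T * Zᴴ) = 0 := by
    ext i j
    rw [Matrix.mul_apply]
    have := hM i j
    rw [Matrix.mul_apply] at this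
    simpa [hLb] using this
  -- Step 3: Lb * T = -1
  have hLbT : Lb * T = -1 := by
    ext i j
    rw [Matrix.mul_apply]
    have hsub : (Finset.univ.map (Fin.castLEEmb (Nat.le_add_left k n))
        : Finset (Fin (n + k))) ⊆ Finset.univ := Finset.subset_univ _
    have hzero' : ∀ x ∈ (Finset.univ : Finset (Fin (n + k))),
        x ∉ Finset.univ.map (Fin.castLEEmb (Nat.le_add_left k n)) →
        Lb i x * T x j = 0 := by
      intro x _ hx
      have hk : k ≤ (x : ℕ) := by
        by_contra hlt
        push_neg at hlt
        exact hx (by simp [Fin.castLEEmb]; exact ⟨⟨x, hlt⟩, by ext; simp⟩)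
      rw [hTbot x hk j, mul_zero]
    rw [← Finset.sum_subset hsub hzero', Finset.sum_map]
    have : ∀ m : Fin k,
        Lb i (Fin.castLEEmb (Nat.le_add_left k n) m) *
          T (Fin.castLEEmb (Nat.le_add_left k n) m) j = (-Tk⁻¹) i m * Tk m j := by
      intro m
      rw [show (Fin.castLEEmb (Nat.le_add_left k n) m : Fin (n+k)) =
          Fin.castLE (Nat.le_add_left k n) m from rfl, hTtop]
      congr 1
      simpa [hLb] using hLbot i m
    rw [Finset.sum_congr rfl fun m _ => this m]
    have : ((-Tk⁻¹) * Tk) i j = (-1 : Matrix (Fin k) (Fin k) ℂ) i j := by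
      rw [Matrix.neg_mul, Matrix.nonsing_inv_mul _ hTkUnit]
    rw [← this, Matrix.mul_apply]
  -- Conclude
  have expand : Lb * Q + (Lb * T) * Zᴴ = 0 := by
    rw [Matrix.mul_assoc, ← Matrix.mul_add]
    exact hLbM
  rw [hLbT] at expand
  have : Lb * Q - Zᴴ = 0 := by
    rw [← expand]; rw [Matrix.neg_mul, Matrix.one_mul]; abel
  have := sub_eq_zero.mp this
  rw [this]
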